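/- For any symmetric positive definite d×d matrices G and H with H ⪯ G, it holds that G ⪯ (1 + κ̂·d·tr(G − H)/tr(H))·H, where κ̂ is the condition number of H (the ratio of its largest to smallest eigenvalue). Moreover, if additionally G ⪯ ηH for some η ≥ 1, then tr(G − H)/tr(H) ≤ η − 1. -/

import Mathlib

open Matrix Finset

variable {d : ℕ}

private lemma star_U_mul_U' {A : Matrix (Fin d) (Fin d) ℝ} (hA : A.IsHermitian) :
    star (hA.eigenvectorUnitary : Matrix (Fin d) (Fin d) ℝ) * hA.eigenvectorUnitary = 1 :=
  Matrix.mem_unitaryGroup_iff'.mp hA.eigenvectorUnitary.2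

private lemma quad_repr' {A : Matrix (Fin d) (Fin d) ℝ} (hA : A.IsHermitian) (x : Fin d → ℝ) :
    x ⬝ᵥ A *ᵥ x = ∑ i, hA.eigenvalues i *
      ((star (hA.eigenvectorUnitary : Matrix (Fin d) (Fin d) ℝ) *ᵥ x) i)^2 := by
  set U := (hA.eigenvectorUnitary : Matrix (Fin d) (Fin d) ℝ) with hU
  conv_lhs => rw [hA.spectral_theorem, Unitary.conjStarAlgAut_apply, ← Matrix.mulVec_mulVec, ← Matrix.mulVec_mulVec,
    Matrix.dotProduct_mulVec]
  have hv : x ᵥ* U = star U *ᵥ x := by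
    rw [Matrix.star_eq_conjTranspose, Matrix.conjTranspose_eq_transpose_of_trivial,
      Matrix.mulVec_transpose]
  rw [hv]
  simp only [Matrix.mulVec_diagonal, dotProduct, Function.comp, RCLike.ofReal_real_eq_id, id]
  exact Finset.sum_congr rfl fun i _ => by ring

private lemma norm_repr' {A : Matrix (Fin d) (Fin d) ℝ} (hA : A.IsHermitian) (x : Fin d → ℝ) :
    x ⬝ᵥ x = ∑ i, ((star (hA.eigenvectorUnitary : Matrix (Fin d) (Fin d) ℝ) *ᵥ x) i)^2 := by
  set U := (hA.eigenvectorUnitary : Matrix (Fin d) (Fin d) ℝ) with hU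
  have hv : x ᵥ* U = star U *ᵥ x := by
    rw [Matrix.star_eq_conjTranspose, Matrix.conjTranspose_eq_transpose_of_trivial,
      Matrix.mulVec_transpose]
  have h1 : U * star U = 1 := Matrix.mem_unitaryGroup_iff.mp hA.eigenvectorUnitary.2
  have h2 : x ⬝ᵥ x = x ⬝ᵥ (U * star U) *ᵥ x := by rw [h1]; simp
  rw [h2, ← Matrix.mulVec_mulVec, Matrix.dotProduct_mulVec, hv]
  simp [dotProduct, sq]

private lemma trace_eq_sum' {A : Matrix (Fin d) (Fin d) ℝ} (hA : A.IsHermitian) :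
    A.trace = ∑ i, hA.eigenvalues i := by
  conv_lhs => rw [hA.spectral_theorem, Unitary.conjStarAlgAut_apply]
  rw [Matrix.trace_mul_comm, ← Matrix.mul_assoc, star_U_mul_U' hA, Matrix.one_mul,
    Matrix.trace_diagonal]
  simp

private lemma trace_nonneg' {A : Matrix (Fin d) (Fin d) ℝ} (hA : A.PosSemidef) :
    0 ≤ A.trace := by
  rw [trace_eq_sum' hA.1]
  exact Finset.sum_nonneg fun i _ => hA.eigenvalues_nonneg i

/-- quadratic form bounded by trace times norm, for PSD matrices. -/
private lemma quad_le_trace' {A : Matrix (Fin d) (Fin d) ℝ} (hA : A.PosSemidef) (x : Fin d → ℝ) :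
    x ⬝ᵥ A *ᵥ x ≤ A.trace * (x ⬝ᵥ x) := by
  rw [quad_repr' hA.1 x, trace_eq_sum' hA.1, norm_repr' hA.1 x, Finset.sum_mul]
  refine Finset.sum_le_sum (fun i _ => ?_)
  refine mul_le_mul_of_nonneg_left ?_ (hA.eigenvalues_nonneg i)
  exact Finset.single_le_sum
    (f := fun j => ((star (hA.1.eigenvectorUnitary : Matrix (Fin d) (Fin d) ℝ) *ᵥ x) j)^2)
    (fun j _ => sq_nonneg _) (Finset.mem_univ i)

theorem loewner_bound_from_trace {d : ℕ} (hd : 0 < d)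
    (G H : Matrix (Fin d) (Fin d) ℝ) (hG : G.PosDef) (hH : H.PosDef)
    (hHG : (G - H).PosSemidef) :
    haveI : Nonempty (Fin d) := Fin.pos_iff_nonempty.mp hd
    (((1 + ((⨆ i, hH.1.eigenvalues i) / (⨅ i, hH.1.eigenvalues i)) * d *
        ((G - H).trace / H.trace)) • H - G).PosSemidef) ∧
      (∀ η : ℝ, 1 ≤ η → (η • H - G).PosSemidef →
        (G - H).trace / H.trace ≤ η - 1) := by
  haveI : Nonempty (Fin d) := Fin.pos_iff_nonempty.mp hd
  set ev := hH.1.eigenvalues with hev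
  set m := ⨅ i, ev i with hmdef
  set M := ⨆ i, ev i with hMdef
  have hml : ∀ i, m ≤ ev i := fun i => ciInf_le (Set.Finite.bddBelow (Set.finite_range ev)) i
  have hMu : ∀ i, ev i ≤ M := fun i => le_ciSup (Set.Finite.bddAbove (Set.finite_range ev)) i
  have hm : 0 < m := by
    obtain ⟨i0, hi0⟩ := Finite.exists_min ev
    have : m = ev i0 := le_antisymm (hml i0) (le_ciInf hi0)
    rw [this]; exact hH.eigenvalues_pos i0
  have htrH : 0 < H.trace := by
    rw [trace_eq_sum' hH.1]
    exact Finset.sum_pos (fun i _ => hH.eigenvalues_pos i) Finset.univ_nonempty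
  have ht : 0 ≤ (G - H).trace := trace_nonneg' hHG
  have hdM : H.trace ≤ d * M := by
    rw [trace_eq_sum' hH.1]
    calc ∑ i, ev i ≤ ∑ _i : Fin d, M := Finset.sum_le_sum fun i _ => hMu i
      _ = d * M := by simp [mul_comm]
  set t := (G - H).trace with htdef
  set c1 := M / m * d * (t / H.trace) with hc1
  have hM : 0 < M := lt_of_lt_of_le hm (le_trans (hml (Classical.arbitrary _)) (hMu _))
  have hc1nn : 0 ≤ c1 := mul_nonneg (mul_nonneg (div_nonneg hM.le hm.le) (Nat.cast_nonneg d))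
    (div_nonneg ht htrH.le)
  have key : t ≤ c1 * m := by
    have h1 : t * H.trace ≤ t * (d * M) := mul_le_mul_of_nonneg_left hdM ht
    have h2 : t = t * H.trace / H.trace := by field_simp
    rw [h2]
    calc t * H.trace / H.trace ≤ t * (d * M) / H.trace :=
          (div_le_div_iff_of_pos_right htrH).mpr h1
      _ = c1 * m := by rw [hc1]; field_simp
  constructor
  · have hsm : ((1 + c1) • H).IsHermitian := by
      have h := hH.1.eq
      rw [Matrix.conjTranspose_eq_transpose_of_trivial] at h
      simp [Matrix.IsHermitian, Matrix.conjTranspose_smul, h]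
    refine posSemidef_iff_dotProduct_mulVec.mpr ⟨hsm.sub hG.1, fun x => ?_⟩
    have hexp : star x ⬝ᵥ ((1 + c1) • H - G) *ᵥ x
        = (1 + c1) * (x ⬝ᵥ H *ᵥ x) - x ⬝ᵥ G *ᵥ x := by
      rw [Matrix.sub_mulVec, dotProduct_sub, Matrix.smul_mulVec, dotProduct_smul]
      simp [star, smul_eq_mul]
    have hq : 0 ≤ x ⬝ᵥ x := by
      rw [norm_repr' hH.1 x]; exact Finset.sum_nonneg fun i _ => sq_nonneg _
    have hqH : m * (x ⬝ᵥ x) ≤ x ⬝ᵥ H *ᵥ x := by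
      rw [quad_repr' hH.1 x, norm_repr' hH.1 x, Finset.mul_sum]
      exact Finset.sum_le_sum fun i _ => mul_le_mul_of_nonneg_right (hml i) (sq_nonneg _)
    have hqGH : x ⬝ᵥ (G - H) *ᵥ x ≤ t * (x ⬝ᵥ x) := quad_le_trace' hHG x
    have hsplit : x ⬝ᵥ G *ᵥ x = x ⬝ᵥ H *ᵥ x + x ⬝ᵥ (G - H) *ᵥ x := by
      rw [Matrix.sub_mulVec, dotProduct_sub]; ring
    have hchain : x ⬝ᵥ (G - H) *ᵥ x ≤ c1 * (x ⬝ᵥ H *ᵥ x) := by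
      calc x ⬝ᵥ (G - H) *ᵥ x ≤ t * (x ⬝ᵥ x) := hqGH
        _ ≤ (c1 * m) * (x ⬝ᵥ x) := mul_le_mul_of_nonneg_right key hq
        _ = c1 * (m * (x ⬝ᵥ x)) := by ring
        _ ≤ c1 * (x ⬝ᵥ H *ᵥ x) := mul_le_mul_of_nonneg_left hqH hc1nn
    rw [hexp, hsplit]
    linarith
  · intro η hη hP
    have h0 : 0 ≤ (η • H - G).trace := trace_nonneg' hP
    rw [Matrix.trace_sub, Matrix.trace_smul, smul_eq_mul] at h0
    rw [div_le_iff₀ htrH]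
    have hG' : t = G.trace - H.trace := Matrix.trace_sub G H
    nlinarith [htrH]
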